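/- Let F be a field with char F ∉ {2,3}, let A be the Matsuo algebra of the affine plane of order 3 over F, let L be a line, and let M and N be the two other lines parallel to L. Then A is the direct sum of the eigenspaces of the left-multiplication operator x ↦ e_L x for the eigenvalues 1, 0 and 1/2, and these eigenspaces are exactly: the 1-eigenspace is F·e_L; the 0-eigenspace is { Σ_{i∈L} λ_i p_i + λ(Σ_{i∈M} p_i − Σ_{i∈N} p_i) : λ_i, λ ∈ F } (dimension 4); and the (1/2)-eigenspace is { Σ_{i∈M} λ_i p_i + Σ_{j∈N} μ_j p_j : Σ_i λ_i = 0 and Σ_j μ_j = 0 } (dimension 4). -/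
import Mathlib


open Finset

/-- The Matsuo algebra `M_{1/2}(P3)` of the affine plane of order 3 over `F`: the free
`F`-module on the point set `P = (ℤ/3)²`, with the commutative bilinear multiplication
determined by `p_u p_u = p_u` and `p_u p_v = (1/4)(p_u + p_v − p_{−u−v})` for `u ≠ v`. -/
noncomputable def mMul (F : Type*) [Field F] (x y : ZMod 3 × ZMod 3 → F) :
    ZMod 3 × ZMod 3 → F :=
  ∑ u : ZMod 3 × ZMod 3, ∑ v : ZMod 3 × ZMod 3,
    (x u * y v) •
      (if u = v then Pi.single u (1 : F)
       else (4⁻¹ : F) • (Pi.single u (1 : F) + Pi.single v (1 : F) -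
         Pi.single (-u - v) (1 : F)) : ZMod 3 × ZMod 3 → F)

/-- The sum `Σ_{u ∈ s} p_u` in the Matsuo algebra. -/
noncomputable def pSum (F : Type*) [Field F] (s : Finset (ZMod 3 × ZMod 3)) :
    ZMod 3 × ZMod 3 → F :=
  ∑ u ∈ s, Pi.single u 1

/-- The line of the affine plane of order 3 through `a` with direction `w`
(a coset of the 1-dimensional subspace spanned by `w`). -/
def lineThru (a w : ZMod 3 × ZMod 3) : Finset (ZMod 3 × ZMod 3) :=
  Finset.image (fun t : ZMod 3 => a + t • w) Finset.univ

-- ### combinatorics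
def fcl (w x : ZMod 3 × ZMod 3) : ZMod 3 := w.2 * x.1 - w.1 * x.2

lemma mem_line : ∀ w a u : ZMod 3 × ZMod 3, w ≠ 0 →
    (u ∈ lineThru a w ↔ fcl w u = fcl w a) := by decide

lemma line_eq : ∀ w a b : ZMod 3 × ZMod 3, w ≠ 0 →
    (lineThru a w = lineThru b w ↔ fcl w a = fcl w b) := by decide

lemma card_line : ∀ a w : ZMod 3 × ZMod 3, w ≠ 0 → (lineThru a w).card = 3 := by decide

lemma fcl_neg : ∀ w p v : ZMod 3 × ZMod 3, fcl w (-p - v) = - fcl w p - fcl w v := by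
  intro w p v; simp only [fcl, Prod.fst_neg, Prod.snd_neg, Prod.fst_sub, Prod.snd_sub]; ring

lemma neg_self_self : ∀ v : ZMod 3 × ZMod 3, -v - v = v := by decide

lemma eq_neg_swap : ∀ p u v : ZMod 3 × ZMod 3, (p = -u - v) ↔ (u = -p - v) := by decide

lemma zmod3_cover : ∀ x y z s : ZMod 3, x ≠ y → x ≠ z → y ≠ z →
    (s = x ∨ s = y ∨ s = z) := by decide

lemma zmod3_sum0 : ∀ x y z : ZMod 3, x ≠ y → x ≠ z → y ≠ z → -x - y = z := by decide

lemma zmod3_diag : ∀ x s : ZMod 3, (-x - s = x ↔ s = x) := by decide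

-- ### evaluation lemmas
section Eval
variable {F : Type*} [Field F]

lemma pSum_apply (s : Finset (ZMod 3 × ZMod 3)) (u : ZMod 3 × ZMod 3) :
    pSum F s u = if u ∈ s then 1 else 0 := by
  rw [pSum, Finset.sum_apply]
  simp only [Pi.single_apply]
  exact Finset.sum_ite_eq s u (fun _ => 1)

lemma sumSingle_apply (s : Finset (ZMod 3 × ZMod 3)) (g : ZMod 3 × ZMod 3 → F)
    (p : ZMod 3 × ZMod 3) :
    (∑ i ∈ s, g i • (Pi.single i 1 : ZMod 3 × ZMod 3 → F)) p
      = if p ∈ s then g p else 0 := by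
  rw [Finset.sum_apply]
  simp only [Pi.smul_apply, Pi.single_apply, smul_eq_mul, mul_ite, mul_one, mul_zero]
  exact Finset.sum_ite_eq s p g

lemma mMul_apply (x y : ZMod 3 × ZMod 3 → F) (p : ZMod 3 × ZMod 3) :
    mMul F x y p = ∑ u : ZMod 3 × ZMod 3, ∑ v : ZMod 3 × ZMod 3,
      x u * y v *
      (if u = v then (if p = u then (1:F) else 0)
       else 4⁻¹ * ((if p = u then (1:F) else 0) + (if p = v then 1 else 0)
         - (if p = -u - v then 1 else 0))) := by
  rw [mMul, Finset.sum_apply]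
  refine Finset.sum_congr rfl fun u _ => ?_
  rw [Finset.sum_apply]
  refine Finset.sum_congr rfl fun v _ => ?_
  simp only [Pi.smul_apply, smul_eq_mul, apply_ite (fun f : ZMod 3 × ZMod 3 → F => f p),
    Pi.smul_apply, Pi.sub_apply, Pi.add_apply, Pi.single_apply, smul_eq_mul]

end Eval

lemma zmod3_nn : ∀ x : ZMod 3, -x - x = x := by decide

lemma vpv_iff : ∀ p v : ZMod 3 × ZMod 3, (v = -p - v) ↔ (p = v) := by decide

section Key
variable {F : Type*} [Field F]

lemma key (f : ZMod 3 × ZMod 3 → F) (hf : ∑ u : ZMod 3 × ZMod 3, f u = 1)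
    (v p : ZMod 3 × ZMod 3) :
    (∑ u : ZMod 3 × ZMod 3, f u *
      (if u = v then (if p = u then (1:F) else 0)
       else 4⁻¹ * ((if p = u then (1:F) else 0) + (if p = v then 1 else 0)
         - (if p = -u - v then 1 else 0))))
    = (if p = v then f v - 4⁻¹ * f v + 4⁻¹ else 0) + 4⁻¹ * f p - 4⁻¹ * f (-p - v) := by
  have hrw : ∀ u : ZMod 3 × ZMod 3, f u *
      (if u = v then (if p = u then (1:F) else 0)
       else 4⁻¹ * ((if p = u then (1:F) else 0) + (if p = v then 1 else 0)
         - (if p = -u - v then 1 else 0)))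
      = ((if u = v then (f v - 4⁻¹ * f v) * (if p = v then (1:F) else 0) else 0)
        + (if p = u then 4⁻¹ * f u else 0))
        + (4⁻¹ * (if p = v then (1:F) else 0)) * f u
        - (if u = -p - v then 4⁻¹ * f u else 0) := by
    intro u
    by_cases huv : u = v
    · subst huv
      simp only [if_pos rfl, vpv_iff p u]
      split_ifs <;> ring
    · simp only [if_neg huv, eq_neg_swap p u v]
      split_ifs <;> ring
  rw [Finset.sum_congr rfl fun u _ => hrw u, Finset.sum_sub_distrib, Finset.sum_add_distrib,
    Finset.sum_add_distrib, Finset.sum_ite_eq' Finset.univ v, Finset.sum_ite_eq Finset.univ p,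
    Finset.sum_ite_eq' Finset.univ (-p - v), ← Finset.mul_sum, hf]
  simp only [Finset.mem_univ, if_true]
  split_ifs with h <;> ring

end Key

lemma zmod3_negneg : ∀ x s : ZMod 3, x ≠ s → -x - s ≠ x := by decide

lemma zmod3_third : ∀ x y : ZMod 3, -x - y = -y - x := by decide

lemma univ_card9 : (Finset.univ : Finset (ZMod 3 × ZMod 3)).card = 9 := by decide

section MasterSec
variable {F : Type*} [Field F]

/-- value of `e_L` -/
lemma eL_val (a w : ZMod 3 × ZMod 3) (hw : w ≠ 0) (h3 : (3:F) ≠ 0) :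
    ((3⁻¹ : F) • pSum F Finset.univ - (2 / 3 : F) • pSum F (lineThru a w))
      = fun u => if u ∈ lineThru a w then -3⁻¹ else 3⁻¹ := by
  funext u
  simp only [Pi.sub_apply, Pi.smul_apply, smul_eq_mul, pSum_apply, Finset.mem_univ, if_true,
    mul_one]
  split_ifs with h
  · rw [mul_one]; field_simp; ring
  · rw [mul_zero]; ring

lemma sum_f_one (a w : ZMod 3 × ZMod 3) (hw : w ≠ 0) (h3 : (3:F) ≠ 0) :
    (∑ u : ZMod 3 × ZMod 3, if u ∈ lineThru a w then (-3⁻¹ : F) else 3⁻¹) = 1 := by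
  rw [Finset.sum_ite]
  have h1 : Finset.univ.filter (fun u : ZMod 3 × ZMod 3 => u ∈ lineThru a w) = lineThru a w := by
    ext u; simp
  have h2 : (Finset.univ.filter (fun u : ZMod 3 × ZMod 3 => ¬ u ∈ lineThru a w)).card = 6 := by
    rw [Finset.filter_not, Finset.card_sdiff_of_subset (Finset.filter_subset _ _), h1,
      card_line a w hw, univ_card9]
  rw [Finset.sum_const, Finset.sum_const, h1, h2, card_line a w hw]
  simp only [nsmul_eq_mul, Nat.cast_ofNat]
  field_simp
  ring

/-- the master formula for left multiplication by `e_L` -/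
lemma master (h2 : (2:F) ≠ 0) (h3 : (3:F) ≠ 0) (a b c w : ZMod 3 × ZMod 3) (hw : w ≠ 0)
    (hLM : lineThru a w ≠ lineThru b w) (hLN : lineThru a w ≠ lineThru c w)
    (hMN : lineThru b w ≠ lineThru c w) (x : ZMod 3 × ZMod 3 → F) (p : ZMod 3 × ZMod 3) :
    mMul F ((3⁻¹ : F) • pSum F Finset.univ - (2 / 3 : F) • pSum F (lineThru a w)) x p =
      if p ∈ lineThru a w then
        -(6⁻¹:F) * ((∑ v ∈ lineThru b w, x v) + (∑ v ∈ lineThru c w, x v))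
      else if p ∈ lineThru b w then 2⁻¹ * x p + 6⁻¹ * (∑ v ∈ lineThru c w, x v)
      else 2⁻¹ * x p + 6⁻¹ * (∑ v ∈ lineThru b w, x v) := by
  have e4 : (4⁻¹:F) = 2⁻¹ * 2⁻¹ := by rw [show (4:F) = 2*2 by norm_num, mul_inv]
  have e6 : (6⁻¹:F) = 2⁻¹ * 3⁻¹ := by rw [show (6:F) = 2*3 by norm_num, mul_inv]
  have i2 : (2:F) * 2⁻¹ = 1 := mul_inv_cancel₀ h2
  have i3 : (3:F) * 3⁻¹ = 1 := mul_inv_cancel₀ h3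
  have hab : fcl w a ≠ fcl w b := fun h => hLM ((line_eq w a b hw).2 h)
  have hac : fcl w a ≠ fcl w c := fun h => hLN ((line_eq w a c hw).2 h)
  have hbc : fcl w b ≠ fcl w c := fun h => hMN ((line_eq w b c hw).2 h)
  set f : ZMod 3 × ZMod 3 → F := fun u => if u ∈ lineThru a w then -3⁻¹ else 3⁻¹ with hfdef
  have hf1 : ∑ u : ZMod 3 × ZMod 3, f u = 1 := sum_f_one a w hw h3
  rw [eL_val a w hw h3, mMul_apply, Finset.sum_comm]
  have step1 : ∀ v : ZMod 3 × ZMod 3,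
      (∑ u : ZMod 3 × ZMod 3, f u * x v *
        (if u = v then (if p = u then (1:F) else 0)
         else 4⁻¹ * ((if p = u then (1:F) else 0) + (if p = v then 1 else 0)
           - (if p = -u - v then 1 else 0))))
      = x v * ((if p = v then f v - 4⁻¹ * f v + 4⁻¹ else 0) + 4⁻¹ * f p
          - 4⁻¹ * f (-p - v)) := by
    intro v
    rw [← key f hf1 v p, Finset.mul_sum]
    exact Finset.sum_congr rfl fun u _ => by ring
  rw [Finset.sum_congr rfl fun v _ => step1 v]
  have step2 : ∀ v : ZMod 3 × ZMod 3,
      x v * ((if p = v then f v - 4⁻¹ * f v + 4⁻¹ else 0) + 4⁻¹ * f p - 4⁻¹ * f (-p - v))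
      = (if p = v then x v * (f v - 4⁻¹ * f v + 4⁻¹) else 0) + (4⁻¹ * f p) * x v
          - 4⁻¹ * (x v * f (-p - v)) := by
    intro v; split_ifs <;> ring
  rw [Finset.sum_congr rfl fun v _ => step2 v, Finset.sum_sub_distrib, Finset.sum_add_distrib,
    Finset.sum_ite_eq Finset.univ p, ← Finset.mul_sum, ← Finset.mul_sum]
  simp only [Finset.mem_univ, if_true]
  -- split the universe into the three lines
  have hdisj1 : Disjoint (lineThru a w) (lineThru b w) := by
    rw [Finset.disjoint_left]
    intro u hu hu'
    exact hab (((mem_line w a u hw).1 hu).symm.trans ((mem_line w b u hw).1 hu'))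
  have hdisj2 : Disjoint (lineThru a w ∪ lineThru b w) (lineThru c w) := by
    rw [Finset.disjoint_left]
    intro u hu hu'
    rcases Finset.mem_union.1 hu with h | h
    · exact hac (((mem_line w a u hw).1 h).symm.trans ((mem_line w c u hw).1 hu'))
    · exact hbc (((mem_line w b u hw).1 h).symm.trans ((mem_line w c u hw).1 hu'))
  have huniv : (Finset.univ : Finset (ZMod 3 × ZMod 3))
      = (lineThru a w ∪ lineThru b w) ∪ lineThru c w := by
    ext u
    simp only [Finset.mem_univ, true_iff, Finset.mem_union]
    rcases zmod3_cover (fcl w a) (fcl w b) (fcl w c) (fcl w u) hab hac hbc with h | h | h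
    · exact Or.inl (Or.inl ((mem_line w a u hw).2 h))
    · exact Or.inl (Or.inr ((mem_line w b u hw).2 h))
    · exact Or.inr ((mem_line w c u hw).2 h)
  have hsplit : ∀ g : ZMod 3 × ZMod 3 → F, ∑ v : ZMod 3 × ZMod 3, g v
      = ∑ v ∈ lineThru a w, g v + ∑ v ∈ lineThru b w, g v + ∑ v ∈ lineThru c w, g v := by
    intro g
    rw [show (Finset.univ : Finset (ZMod 3 × ZMod 3))
        = (lineThru a w ∪ lineThru b w) ∪ lineThru c w from huniv,
      Finset.sum_union hdisj2, Finset.sum_union hdisj1]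
  -- value of f on each line, and of f (-p-v)
  have hfval : ∀ u : ZMod 3 × ZMod 3, f u = if fcl w u = fcl w a then -3⁻¹ else 3⁻¹ := by
    intro u
    show (if u ∈ lineThru a w then (-3⁻¹:F) else 3⁻¹) = _
    by_cases h : fcl w u = fcl w a
    · rw [if_pos ((mem_line w a u hw).2 h), if_pos h]
    · rw [if_neg (fun hm => h ((mem_line w a u hw).1 hm)), if_neg h]
  -- compute ∑ v, x v * f (-p - v) on each line depending on the class of p
  have hline_const : ∀ (d : ZMod 3 × ZMod 3) (cst : F),
      (∀ v ∈ lineThru d w, x v * f (-p - v) = x v * cst) →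
      ∑ v ∈ lineThru d w, x v * f (-p - v) = (∑ v ∈ lineThru d w, x v) * cst := by
    intro d cst h
    rw [Finset.sum_congr rfl h, ← Finset.sum_mul]
  have hfneg : ∀ v : ZMod 3 × ZMod 3, f (-p - v)
      = if -(fcl w p) - fcl w v = fcl w a then (-3⁻¹:F) else 3⁻¹ := by
    intro v; rw [hfval, fcl_neg]
  rcases zmod3_cover (fcl w a) (fcl w b) (fcl w c) (fcl w p) hab hac hbc with hp | hp | hp
  · -- p ∈ L
    have hpL : p ∈ lineThru a w := (mem_line w a p hw).2 hp
    rw [if_pos hpL]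
    have hA : ∑ v ∈ lineThru a w, x v * f (-p - v) = (∑ v ∈ lineThru a w, x v) * (-3⁻¹) := by
      refine hline_const a _ fun v hv => ?_
      rw [hfneg, hp, (mem_line w a v hw).1 hv, if_pos (zmod3_nn _)]
    have hB : ∑ v ∈ lineThru b w, x v * f (-p - v) = (∑ v ∈ lineThru b w, x v) * 3⁻¹ := by
      refine hline_const b _ fun v hv => ?_
      rw [hfneg, hp, (mem_line w b v hw).1 hv,
        if_neg (zmod3_negneg (fcl w a) (fcl w b) hab)]
    have hC : ∑ v ∈ lineThru c w, x v * f (-p - v) = (∑ v ∈ lineThru c w, x v) * 3⁻¹ := by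
      refine hline_const c _ fun v hv => ?_
      rw [hfneg, hp, (mem_line w c v hw).1 hv,
        if_neg (zmod3_negneg (fcl w a) (fcl w c) hac)]
    rw [hsplit (fun v => x v * f (-p - v)), hA, hB, hC, hsplit x]
    have hfp : f p = -3⁻¹ := by rw [hfval, if_pos hp]
    rw [hfp]
    simp only [e4, e6]
    linear_combination (x p * 3⁻¹ + 2*2⁻¹*3⁻¹*(x p) - 2⁻¹*3⁻¹*(∑ v ∈ lineThru b w, x v) - 2⁻¹*3⁻¹*(∑ v ∈ lineThru c w, x v)) * i2 + (-(2⁻¹*2⁻¹*(x p))) * i3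
  · -- p ∈ M
    have hpM : p ∈ lineThru b w := (mem_line w b p hw).2 hp
    have hpL : p ∉ lineThru a w := fun hm => hab (((mem_line w a p hw).1 hm).symm.trans hp)
    rw [if_neg hpL, if_pos hpM]
    have hA : ∑ v ∈ lineThru a w, x v * f (-p - v) = (∑ v ∈ lineThru a w, x v) * 3⁻¹ := by
      refine hline_const a _ fun v hv => ?_
      rw [hfneg, hp, (mem_line w a v hw).1 hv, zmod3_third,
        if_neg (zmod3_negneg (fcl w a) (fcl w b) hab)]
    have hB : ∑ v ∈ lineThru b w, x v * f (-p - v) = (∑ v ∈ lineThru b w, x v) * 3⁻¹ := by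
      refine hline_const b _ fun v hv => ?_
      rw [hfneg, hp, (mem_line w b v hw).1 hv, zmod3_nn]
      rw [if_neg (fun h : fcl w b = fcl w a => hab h.symm)]
    have hC : ∑ v ∈ lineThru c w, x v * f (-p - v) = (∑ v ∈ lineThru c w, x v) * (-3⁻¹) := by
      refine hline_const c _ fun v hv => ?_
      rw [hfneg, hp, (mem_line w c v hw).1 hv, if_pos (zmod3_sum0 _ _ _ hbc hab.symm hac.symm)]
    rw [hsplit (fun v => x v * f (-p - v)), hA, hB, hC, hsplit x]
    have hfp : f p = 3⁻¹ := by rw [hfval, if_neg (fun h => hab (h.symm.trans hp))]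
    rw [hfp]
    simp only [e4, e6]
    linear_combination (x p*3⁻¹*(2⁻¹-1) + 2⁻¹*3⁻¹*(∑ v ∈ lineThru c w, x v)) * i2 + (x p*(2⁻¹-2⁻¹*2⁻¹)) * i3
  · -- p ∈ N
    have hpN : p ∈ lineThru c w := (mem_line w c p hw).2 hp
    have hpL : p ∉ lineThru a w := fun hm => hac (((mem_line w a p hw).1 hm).symm.trans hp)
    have hpM : p ∉ lineThru b w := fun hm => hbc (((mem_line w b p hw).1 hm).symm.trans hp)
    rw [if_neg hpL, if_neg hpM]
    have hA : ∑ v ∈ lineThru a w, x v * f (-p - v) = (∑ v ∈ lineThru a w, x v) * 3⁻¹ := by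
      refine hline_const a _ fun v hv => ?_
      rw [hfneg, hp, (mem_line w a v hw).1 hv, zmod3_third,
        if_neg (zmod3_negneg (fcl w a) (fcl w c) hac)]
    have hB : ∑ v ∈ lineThru b w, x v * f (-p - v) = (∑ v ∈ lineThru b w, x v) * (-3⁻¹) := by
      refine hline_const b _ fun v hv => ?_
      rw [hfneg, hp, (mem_line w b v hw).1 hv,
        if_pos (zmod3_sum0 _ _ _ hbc.symm hac.symm hab.symm)]
    have hC : ∑ v ∈ lineThru c w, x v * f (-p - v) = (∑ v ∈ lineThru c w, x v) * 3⁻¹ := by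
      refine hline_const c _ fun v hv => ?_
      rw [hfneg, hp, (mem_line w c v hw).1 hv, zmod3_nn]
      rw [if_neg (fun h : fcl w c = fcl w a => hac h.symm)]
    rw [hsplit (fun v => x v * f (-p - v)), hA, hB, hC, hsplit x]
    have hfp : f p = 3⁻¹ := by rw [hfval, if_neg (fun h => hac (h.symm.trans hp))]
    rw [hfp]
    simp only [e4, e6]
    linear_combination (x p*3⁻¹*(2⁻¹-1) + 2⁻¹*3⁻¹*(∑ v ∈ lineThru b w, x v)) * i2 + (x p*(2⁻¹-2⁻¹*2⁻¹)) * i3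

end MasterSec

/-- Let `char F ∉ {2,3}`, let `L` be a line of the affine plane of order 3 and
let `M`, `N` be the two other lines parallel to `L`.  Then the Matsuo algebra is the direct sum
of the eigenspaces of `x ↦ e_L x` for the eigenvalues `1`, `0`, `1/2`, and these eigenspaces
are exactly `F·e_L`, `{ Σ_{i∈L} λ_i p_i + λ(Σ_{i∈M} p_i − Σ_{i∈N} p_i) }` and
`{ Σ_{i∈M} λ_i p_i + Σ_{j∈N} μ_j p_j : Σλ_i = 0, Σμ_j = 0 }` respectively. -/
theorem stmt_8 (F : Type*) [Field F] (h2 : (2 : F) ≠ 0) (h3 : (3 : F) ≠ 0)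
    (a b c w : ZMod 3 × ZMod 3) (hw : w ≠ 0)
    (hLM : lineThru a w ≠ lineThru b w) (hLN : lineThru a w ≠ lineThru c w)
    (hMN : lineThru b w ≠ lineThru c w) :
    let eL : ZMod 3 × ZMod 3 → F :=
      (3⁻¹ : F) • pSum F Finset.univ - (2 / 3 : F) • pSum F (lineThru a w)
    ({x : ZMod 3 × ZMod 3 → F | mMul F eL x = x} =
        Set.range (fun t : F => t • eL)) ∧
    ({x : ZMod 3 × ZMod 3 → F | mMul F eL x = 0} =
        {x : ZMod 3 × ZMod 3 → F | ∃ (g : ZMod 3 × ZMod 3 → F) (l : F),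
          x = (∑ i ∈ lineThru a w, g i • (Pi.single i 1 : ZMod 3 × ZMod 3 → F)) +
            l • (pSum F (lineThru b w) - pSum F (lineThru c w))}) ∧
    ({x : ZMod 3 × ZMod 3 → F | mMul F eL x = (2⁻¹ : F) • x} =
        {x : ZMod 3 × ZMod 3 → F | ∃ g h : ZMod 3 × ZMod 3 → F,
          (∑ i ∈ lineThru b w, g i) = 0 ∧ (∑ j ∈ lineThru c w, h j) = 0 ∧
          x = (∑ i ∈ lineThru b w, g i • (Pi.single i 1 : ZMod 3 × ZMod 3 → F)) +
            (∑ j ∈ lineThru c w, h j • (Pi.single j 1 : ZMod 3 × ZMod 3 → F))}) ∧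
    (∀ x : ZMod 3 × ZMod 3 → F, ∃ x1 x0 xh : ZMod 3 × ZMod 3 → F,
      mMul F eL x1 = x1 ∧ mMul F eL x0 = 0 ∧ mMul F eL xh = (2⁻¹ : F) • xh ∧
      x = x1 + x0 + xh ∧
      ∀ y1 y0 yh : ZMod 3 × ZMod 3 → F,
        mMul F eL y1 = y1 → mMul F eL y0 = 0 → mMul F eL yh = (2⁻¹ : F) • yh →
        x = y1 + y0 + yh → y1 = x1 ∧ y0 = x0 ∧ yh = xh) := by
  intro eL
  -- basic arithmetic facts
  have i2 : (2:F) * 2⁻¹ = 1 := mul_inv_cancel₀ h2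
  have i3 : (3:F) * 3⁻¹ = 1 := mul_inv_cancel₀ h3
  have e6 : (6⁻¹:F) = 2⁻¹ * 3⁻¹ := by rw [show (6:F) = 2*3 by norm_num, mul_inv]
  -- class facts
  have hab : fcl w a ≠ fcl w b := fun h => hLM ((line_eq w a b hw).2 h)
  have hac : fcl w a ≠ fcl w c := fun h => hLN ((line_eq w a c hw).2 h)
  have hbc : fcl w b ≠ fcl w c := fun h => hMN ((line_eq w b c hw).2 h)
  have memL : ∀ p, p ∈ lineThru a w ↔ fcl w p = fcl w a := fun p => mem_line w a p hw
  have memM : ∀ p, p ∈ lineThru b w ↔ fcl w p = fcl w b := fun p => mem_line w b p hw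
  have memN : ∀ p, p ∈ lineThru c w ↔ fcl w p = fcl w c := fun p => mem_line w c p hw
  have cover : ∀ p : ZMod 3 × ZMod 3,
      p ∈ lineThru a w ∨ p ∈ lineThru b w ∨ p ∈ lineThru c w := by
    intro p
    rcases zmod3_cover (fcl w a) (fcl w b) (fcl w c) (fcl w p) hab hac hbc with h | h | h
    · exact Or.inl ((memL p).2 h)
    · exact Or.inr (Or.inl ((memM p).2 h))
    · exact Or.inr (Or.inr ((memN p).2 h))
  have dML : ∀ p, p ∈ lineThru b w → p ∉ lineThru a w :=
    fun p hp hq => hab (((memL p).1 hq).symm.trans ((memM p).1 hp))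
  have dNL : ∀ p, p ∈ lineThru c w → p ∉ lineThru a w :=
    fun p hp hq => hac (((memL p).1 hq).symm.trans ((memN p).1 hp))
  have dNM : ∀ p, p ∈ lineThru c w → p ∉ lineThru b w :=
    fun p hp hq => hbc (((memM p).1 hq).symm.trans ((memN p).1 hp))
  have dLM : ∀ p, p ∈ lineThru a w → p ∉ lineThru b w :=
    fun p hp hq => dML p hq hp
  have dLN : ∀ p, p ∈ lineThru a w → p ∉ lineThru c w :=
    fun p hp hq => dNL p hq hp
  have dMN : ∀ p, p ∈ lineThru b w → p ∉ lineThru c w :=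
    fun p hp hq => dNM p hq hp
  -- constant sums over lines
  have sumc : ∀ (d : ZMod 3 × ZMod 3) (k : F) (g : ZMod 3 × ZMod 3 → F),
      (∀ v ∈ lineThru d w, g v = k) → ∑ v ∈ lineThru d w, g v = 3 * k := by
    intro d k g h
    rw [Finset.sum_congr rfl h, Finset.sum_const, card_line d w hw]
    rw [nsmul_eq_mul]
    norm_num
  -- the master formula
  have hm : ∀ (x : ZMod 3 × ZMod 3 → F) (p : ZMod 3 × ZMod 3), mMul F eL x p =
      if p ∈ lineThru a w then
        -(6⁻¹:F) * ((∑ v ∈ lineThru b w, x v) + (∑ v ∈ lineThru c w, x v))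
      else if p ∈ lineThru b w then 2⁻¹ * x p + 6⁻¹ * (∑ v ∈ lineThru c w, x v)
      else 2⁻¹ * x p + 6⁻¹ * (∑ v ∈ lineThru b w, x v) :=
    fun x p => master h2 h3 a b c w hw hLM hLN hMN x p
  have heLv : ∀ u, eL u = if u ∈ lineThru a w then -3⁻¹ else 3⁻¹ :=
    fun u => congrFun (eL_val a w hw h3) u
  -- characterisation of 1-eigenvectors
  have char1 : ∀ y : ZMod 3 × ZMod 3 → F, mMul F eL y = y →
      ∀ p, y p = (if p ∈ lineThru a w then -(3⁻¹:F) else 3⁻¹) * (∑ v ∈ lineThru c w, y v) := by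
    intro y hy
    have hy' : ∀ p, (if p ∈ lineThru a w then
        -(6⁻¹:F) * ((∑ v ∈ lineThru b w, y v) + (∑ v ∈ lineThru c w, y v))
      else if p ∈ lineThru b w then 2⁻¹ * y p + 6⁻¹ * (∑ v ∈ lineThru c w, y v)
      else 2⁻¹ * y p + 6⁻¹ * (∑ v ∈ lineThru b w, y v)) = y p := by
      intro p; rw [← hm y p]; exact congrFun hy p
    have hMval : ∀ p ∈ lineThru b w, y p = 3⁻¹ * (∑ v ∈ lineThru c w, y v) := by
      intro p hp
      have h := hy' p
      rw [if_neg (dML p hp), if_pos hp, e6] at h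
      linear_combination (-2:F) * h + (y p + 3⁻¹ * (∑ v ∈ lineThru c w, y v)) * i2
    have hSB : (∑ v ∈ lineThru b w, y v) = ∑ v ∈ lineThru c w, y v := by
      rw [sumc b (3⁻¹ * (∑ v ∈ lineThru c w, y v)) y hMval]
      linear_combination (∑ v ∈ lineThru c w, y v) * i3
    intro p
    rcases cover p with hp | hp | hp
    · have h := hy' p
      rw [if_pos hp, hSB, e6] at h
      rw [if_pos hp]
      linear_combination (-1:F) * h + (-(3⁻¹) * (∑ v ∈ lineThru c w, y v)) * i2
    · rw [if_neg (dML p hp)]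
      linear_combination hMval p hp
    · have h := hy' p
      rw [if_neg (dNL p hp), if_neg (dNM p hp), hSB, e6] at h
      rw [if_neg (dNL p hp)]
      linear_combination (-2:F) * h + (y p + 3⁻¹ * (∑ v ∈ lineThru c w, y v)) * i2
  -- characterisation of 0-eigenvectors
  have char0 : ∀ y : ZMod 3 × ZMod 3 → F, mMul F eL y = 0 →
      ∀ p, p ∉ lineThru a w →
        y p = (if p ∈ lineThru b w then -(3⁻¹:F) else 3⁻¹) * (∑ v ∈ lineThru c w, y v) := by
    intro y hy
    have hy' : ∀ p, (if p ∈ lineThru a w then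
        -(6⁻¹:F) * ((∑ v ∈ lineThru b w, y v) + (∑ v ∈ lineThru c w, y v))
      else if p ∈ lineThru b w then 2⁻¹ * y p + 6⁻¹ * (∑ v ∈ lineThru c w, y v)
      else 2⁻¹ * y p + 6⁻¹ * (∑ v ∈ lineThru b w, y v)) = 0 := by
      intro p; rw [← hm y p]; exact congrFun hy p
    have hMval : ∀ p ∈ lineThru b w, y p = -(3⁻¹) * (∑ v ∈ lineThru c w, y v) := by
      intro p hp
      have h := hy' p
      rw [if_neg (dML p hp), if_pos hp, e6] at h
      linear_combination (2:F) * h + (-(y p) - 3⁻¹ * (∑ v ∈ lineThru c w, y v)) * i2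
    have hSB : (∑ v ∈ lineThru b w, y v) = -(∑ v ∈ lineThru c w, y v) := by
      rw [sumc b (-(3⁻¹) * (∑ v ∈ lineThru c w, y v)) y hMval]
      linear_combination (-(∑ v ∈ lineThru c w, y v)) * i3
    intro p hpL
    by_cases hp : p ∈ lineThru b w
    · rw [if_pos hp]; exact hMval p hp
    · rw [if_neg hp]
      have h := hy' p
      rw [if_neg hpL, if_neg hp, hSB, e6] at h
      linear_combination (2:F) * h + (-(y p) + 3⁻¹ * (∑ v ∈ lineThru c w, y v)) * i2
  -- characterisation of (1/2)-eigenvectors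
  have charh : ∀ y : ZMod 3 × ZMod 3 → F, mMul F eL y = (2⁻¹:F) • y →
      (∀ p ∈ lineThru a w, y p = 0) ∧ (∑ v ∈ lineThru b w, y v) = 0 ∧
        (∑ v ∈ lineThru c w, y v) = 0 := by
    intro y hy
    have hy' : ∀ p, (if p ∈ lineThru a w then
        -(6⁻¹:F) * ((∑ v ∈ lineThru b w, y v) + (∑ v ∈ lineThru c w, y v))
      else if p ∈ lineThru b w then 2⁻¹ * y p + 6⁻¹ * (∑ v ∈ lineThru c w, y v)
      else 2⁻¹ * y p + 6⁻¹ * (∑ v ∈ lineThru b w, y v)) = 2⁻¹ * y p := by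
      intro p
      rw [← hm y p, hy]
      simp [Pi.smul_apply, smul_eq_mul]
    have hSC : (∑ v ∈ lineThru c w, y v) = 0 := by
      obtain ⟨p, hp⟩ : ∃ p, p ∈ lineThru b w := ⟨b + (0:ZMod 3) • w, by
        apply Finset.mem_image_of_mem; exact Finset.mem_univ _⟩
      have h := hy' p
      rw [if_neg (dML p hp), if_pos hp, e6] at h
      linear_combination (6:F) * h + (-3*3⁻¹*(∑ v ∈ lineThru c w, y v)) * i2
        + (-(∑ v ∈ lineThru c w, y v)) * i3
    have hSB : (∑ v ∈ lineThru b w, y v) = 0 := by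
      obtain ⟨p, hp⟩ : ∃ p, p ∈ lineThru c w := ⟨c + (0:ZMod 3) • w, by
        apply Finset.mem_image_of_mem; exact Finset.mem_univ _⟩
      have h := hy' p
      rw [if_neg (dNL p hp), if_neg (dNM p hp), e6] at h
      linear_combination (6:F) * h + (-3*3⁻¹*(∑ v ∈ lineThru b w, y v)) * i2
        + (-(∑ v ∈ lineThru b w, y v)) * i3
    refine ⟨?_, hSB, hSC⟩
    intro p hp
    have h := hy' p
    rw [if_pos hp, hSB, hSC, e6] at h
    linear_combination (-2:F) * h + (-(y p)) * i2
  -- eigenvector constructors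
  have mk1 : ∀ t : F, mMul F eL (t • eL) = t • eL := by
    intro t
    funext p
    rw [hm]
    have hB : ∑ v ∈ lineThru b w, (t • eL) v = t := by
      rw [sumc b (t * 3⁻¹) (t • eL) (fun v hv => by
        rw [Pi.smul_apply, smul_eq_mul, heLv, if_neg (dML v hv)])]
      linear_combination t * i3
    have hC : ∑ v ∈ lineThru c w, (t • eL) v = t := by
      rw [sumc c (t * 3⁻¹) (t • eL) (fun v hv => by
        rw [Pi.smul_apply, smul_eq_mul, heLv, if_neg (dNL v hv)])]
      linear_combination t * i3
    rw [hB, hC]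
    have hval : (t • eL) p = t * (if p ∈ lineThru a w then -(3⁻¹:F) else 3⁻¹) := by
      rw [Pi.smul_apply, smul_eq_mul, heLv p]
    rw [hval]
    rcases cover p with hp | hp | hp
    · rw [if_pos hp, if_pos hp, e6]
      linear_combination (-(3⁻¹ * t)) * i2
    · rw [if_neg (dML p hp), if_pos hp, if_neg (dML p hp), e6]
      linear_combination (3⁻¹ * t) * i2
    · rw [if_neg (dNL p hp), if_neg (dNM p hp), if_neg (dNL p hp), e6]
      linear_combination (3⁻¹ * t) * i2
  -- zero eigenvector constructor
  have mk0 : ∀ (g : ZMod 3 × ZMod 3 → F) (l : F),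
      mMul F eL ((∑ i ∈ lineThru a w, g i • (Pi.single i 1 : ZMod 3 × ZMod 3 → F)) +
        l • (pSum F (lineThru b w) - pSum F (lineThru c w))) = 0 := by
    intro g l
    set y : ZMod 3 × ZMod 3 → F :=
      (∑ i ∈ lineThru a w, g i • (Pi.single i 1 : ZMod 3 × ZMod 3 → F)) +
        l • (pSum F (lineThru b w) - pSum F (lineThru c w)) with hydef
    have hyval : ∀ p, y p = (if p ∈ lineThru a w then g p else 0) +
        l * ((if p ∈ lineThru b w then 1 else 0) - (if p ∈ lineThru c w then 1 else 0)) := by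
      intro p
      rw [hydef]
      simp only [Pi.add_apply, Pi.smul_apply, Pi.sub_apply, smul_eq_mul,
        sumSingle_apply, pSum_apply]
    funext p
    rw [hm, Pi.zero_apply]
    have hB : ∑ v ∈ lineThru b w, y v = 3 * l := by
      refine sumc b l y fun v hv => ?_
      rw [hyval, if_neg (dML v hv), if_pos hv, if_neg (dMN v hv)]
      ring
    have hC : ∑ v ∈ lineThru c w, y v = 3 * (-l) := by
      refine sumc c (-l) y fun v hv => ?_
      rw [hyval, if_neg (dNL v hv), if_neg (dNM v hv), if_pos hv]
      ring
    rw [hB, hC]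
    rcases cover p with hp | hp | hp
    · rw [if_pos hp]; ring
    · rw [if_neg (dML p hp), if_pos hp, hyval, if_neg (dML p hp), if_pos hp,
        if_neg (dMN p hp), e6]
      linear_combination (-(2⁻¹*l)) * i3
    · rw [if_neg (dNL p hp), if_neg (dNM p hp), hyval, if_neg (dNL p hp),
        if_neg (dNM p hp), if_pos hp, e6]
      linear_combination (2⁻¹*l) * i3
  -- half eigenvector constructor
  have mkh : ∀ (g h : ZMod 3 × ZMod 3 → F), (∑ i ∈ lineThru b w, g i) = 0 →
      (∑ j ∈ lineThru c w, h j) = 0 →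
      mMul F eL ((∑ i ∈ lineThru b w, g i • (Pi.single i 1 : ZMod 3 × ZMod 3 → F)) +
        (∑ j ∈ lineThru c w, h j • (Pi.single j 1 : ZMod 3 × ZMod 3 → F)))
      = (2⁻¹:F) • ((∑ i ∈ lineThru b w, g i • (Pi.single i 1 : ZMod 3 × ZMod 3 → F)) +
        (∑ j ∈ lineThru c w, h j • (Pi.single j 1 : ZMod 3 × ZMod 3 → F))) := by
    intro g h hg hh
    set y : ZMod 3 × ZMod 3 → F :=
      (∑ i ∈ lineThru b w, g i • (Pi.single i 1 : ZMod 3 × ZMod 3 → F)) +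
        (∑ j ∈ lineThru c w, h j • (Pi.single j 1 : ZMod 3 × ZMod 3 → F)) with hydef
    have hyval : ∀ p, y p = (if p ∈ lineThru b w then g p else 0) +
        (if p ∈ lineThru c w then h p else 0) := by
      intro p
      rw [hydef]
      simp only [Pi.add_apply, sumSingle_apply]
    have hB : ∑ v ∈ lineThru b w, y v = 0 := by
      rw [← hg]
      refine Finset.sum_congr rfl fun v hv => ?_
      rw [hyval, if_pos hv, if_neg (dMN v hv), add_zero]
    have hC : ∑ v ∈ lineThru c w, y v = 0 := by
      rw [← hh]
      refine Finset.sum_congr rfl fun v hv => ?_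
      rw [hyval, if_neg (dNM v hv), if_pos hv, zero_add]
    funext p
    rw [hm, hB, hC, Pi.smul_apply, smul_eq_mul]
    rcases cover p with hp | hp | hp
    · rw [if_pos hp, hyval, if_neg (dLM p hp), if_neg (dLN p hp)]
      ring
    · rw [if_neg (dML p hp), if_pos hp]
      ring
    · rw [if_neg (dNL p hp), if_neg (dNM p hp)]
      ring
  refine ⟨?_, ?_, ?_, ?_⟩
  · -- 1-eigenspace
    ext y
    simp only [Set.mem_setOf_eq, Set.mem_range]
    constructor
    · intro hy
      refine ⟨∑ v ∈ lineThru c w, y v, ?_⟩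
      funext p
      rw [Pi.smul_apply, smul_eq_mul, heLv p, char1 y hy p]
      ring
    · rintro ⟨t, rfl⟩
      exact mk1 t
  · -- 0-eigenspace
    ext y
    simp only [Set.mem_setOf_eq]
    constructor
    · intro hy
      refine ⟨y, -(3⁻¹) * (∑ v ∈ lineThru c w, y v), ?_⟩
      funext p
      have hval : ((∑ i ∈ lineThru a w, y i • (Pi.single i 1 : ZMod 3 × ZMod 3 → F)) +
          (-(3⁻¹) * (∑ v ∈ lineThru c w, y v)) •
            (pSum F (lineThru b w) - pSum F (lineThru c w))) p
          = (if p ∈ lineThru a w then y p else 0) +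
            (-(3⁻¹) * (∑ v ∈ lineThru c w, y v)) *
              ((if p ∈ lineThru b w then 1 else 0) - (if p ∈ lineThru c w then 1 else 0)) := by
        simp only [Pi.add_apply, Pi.smul_apply, Pi.sub_apply, smul_eq_mul,
          sumSingle_apply, pSum_apply]
      rw [hval]
      rcases cover p with hp | hp | hp
      · rw [if_pos hp, if_neg (dLM p hp), if_neg (dLN p hp)]; ring
      · rw [if_neg (dML p hp), if_pos hp, if_neg (dMN p hp), char0 y hy p (dML p hp),
          if_pos hp]
        ring
      · rw [if_neg (dNL p hp), if_neg (dNM p hp), if_pos hp, char0 y hy p (dNL p hp),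
          if_neg (dNM p hp)]
        ring
    · rintro ⟨g, l, rfl⟩
      exact mk0 g l
  · -- half eigenspace
    ext y
    simp only [Set.mem_setOf_eq]
    constructor
    · intro hy
      obtain ⟨hL0, hB0, hC0⟩ := charh y hy
      refine ⟨y, y, hB0, hC0, ?_⟩
      funext p
      have hval : ((∑ i ∈ lineThru b w, y i • (Pi.single i 1 : ZMod 3 × ZMod 3 → F)) +
          (∑ j ∈ lineThru c w, y j • (Pi.single j 1 : ZMod 3 × ZMod 3 → F))) p
          = (if p ∈ lineThru b w then y p else 0) +
            (if p ∈ lineThru c w then y p else 0) := by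
        simp only [Pi.add_apply, sumSingle_apply]
      rw [hval]
      rcases cover p with hp | hp | hp
      · rw [if_neg (dLM p hp), if_neg (dLN p hp), hL0 p hp]; ring
      · rw [if_pos hp, if_neg (dMN p hp)]; ring
      · rw [if_neg (dNM p hp), if_pos hp]; ring
    · rintro ⟨g, h, hg, hh, rfl⟩
      exact mkh g h hg hh
  · -- direct sum decomposition
    intro x
    set SB := ∑ v ∈ lineThru b w, x v with hSBdef
    set SC := ∑ v ∈ lineThru c w, x v with hSCdef
    set t : F := 2⁻¹ * (SB + SC) with htdef
    set l : F := 6⁻¹ * (SB - SC) with hldef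
    refine ⟨t • eL,
      (fun p => if p ∈ lineThru a w then x p + 3⁻¹ * t
        else if p ∈ lineThru b w then l else -l),
      (fun p => if p ∈ lineThru a w then 0
        else if p ∈ lineThru b w then x p - 3⁻¹ * t - l else x p - 3⁻¹ * t + l),
      mk1 t, ?_, ?_, ?_, ?_⟩
    · -- x0 is a 0-eigenvector
      have hform : (fun p => if p ∈ lineThru a w then x p + 3⁻¹ * t
          else if p ∈ lineThru b w then l else -l)
          = (∑ i ∈ lineThru a w, (x i + 3⁻¹ * t) • (Pi.single i 1 : ZMod 3 × ZMod 3 → F)) +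
            l • (pSum F (lineThru b w) - pSum F (lineThru c w)) := by
        funext p
        simp only [Pi.add_apply, Pi.smul_apply, Pi.sub_apply, smul_eq_mul,
          sumSingle_apply, pSum_apply]
        rcases cover p with hp | hp | hp
        · rw [if_pos hp, if_pos hp, if_neg (dLM p hp), if_neg (dLN p hp)]; ring
        · rw [if_neg (dML p hp), if_pos hp, if_neg (dML p hp), if_pos hp,
            if_neg (dMN p hp)]; ring
        · rw [if_neg (dNL p hp), if_neg (dNM p hp), if_neg (dNL p hp),
            if_neg (dNM p hp), if_pos hp]; ring
      rw [hform]
      exact mk0 _ l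
    · -- xh is a (1/2)-eigenvector
      have hs1 : (∑ i ∈ lineThru b w, (x i - 3⁻¹ * t - l)) = 0 := by
        have e1 : (∑ i ∈ lineThru b w, (x i - 3⁻¹ * t - l))
            = SB - ∑ i ∈ lineThru b w, (3⁻¹ * t + l) := by
          rw [hSBdef, ← Finset.sum_sub_distrib]
          exact Finset.sum_congr rfl fun v _ => by ring
        rw [e1, sumc b (3⁻¹ * t + l) (fun _ => 3⁻¹ * t + l) (fun v _ => rfl), htdef, hldef, e6]
        linear_combination (-(3*3⁻¹*SB)) * i2 + (-SB) * i3
      have hs2 : (∑ j ∈ lineThru c w, (x j - 3⁻¹ * t + l)) = 0 := by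
        have e1 : (∑ j ∈ lineThru c w, (x j - 3⁻¹ * t + l))
            = SC - ∑ j ∈ lineThru c w, (3⁻¹ * t - l) := by
          rw [hSCdef, ← Finset.sum_sub_distrib]
          exact Finset.sum_congr rfl fun v _ => by ring
        rw [e1, sumc c (3⁻¹ * t - l) (fun _ => 3⁻¹ * t - l) (fun v _ => rfl), htdef, hldef, e6]
        linear_combination (-(3*3⁻¹*SC)) * i2 + (-SC) * i3
      have hform : (fun p => if p ∈ lineThru a w then (0:F)
          else if p ∈ lineThru b w then x p - 3⁻¹ * t - l else x p - 3⁻¹ * t + l)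
          = (∑ i ∈ lineThru b w, (x i - 3⁻¹ * t - l) •
              (Pi.single i 1 : ZMod 3 × ZMod 3 → F)) +
            (∑ j ∈ lineThru c w, (x j - 3⁻¹ * t + l) •
              (Pi.single j 1 : ZMod 3 × ZMod 3 → F)) := by
        funext p
        simp only [Pi.add_apply, sumSingle_apply]
        rcases cover p with hp | hp | hp
        · rw [if_pos hp, if_neg (dLM p hp), if_neg (dLN p hp)]; ring
        · rw [if_neg (dML p hp), if_pos hp, if_pos hp, if_neg (dMN p hp)]; ring
        · rw [if_neg (dNL p hp), if_neg (dNM p hp), if_neg (dNM p hp), if_pos hp]; ring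
      rw [hform]
      exact mkh _ _ hs1 hs2
    · -- x is the sum
      funext p
      simp only [Pi.add_apply, Pi.smul_apply, smul_eq_mul]
      rw [heLv p]
      rcases cover p with hp | hp | hp
      · rw [if_pos hp, if_pos hp, if_pos hp]; ring
      · rw [if_neg (dML p hp), if_neg (dML p hp), if_neg (dML p hp), if_pos hp, if_pos hp]
        ring
      · rw [if_neg (dNL p hp), if_neg (dNL p hp), if_neg (dNL p hp),
          if_neg (dNM p hp), if_neg (dNM p hp)]
        ring
    · -- uniqueness
      intro y1 y0 yh hy1 hy0 hyh hxsum
      obtain ⟨hL0, hSByh, hSCyh⟩ := charh yh hyh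
      set s : F := ∑ v ∈ lineThru c w, y1 v with hsdef
      set m : F := ∑ v ∈ lineThru c w, y0 v with hmdef
      have hy1M : ∀ p ∈ lineThru b w, y1 p = 3⁻¹ * s := by
        intro p hp
        rw [char1 y1 hy1 p, if_neg (dML p hp), hsdef]
      have hy0M : ∀ p ∈ lineThru b w, y0 p = -(3⁻¹) * m := by
        intro p hp
        rw [char0 y0 hy0 p (dML p hp), if_pos hp, hmdef]
      have hSBy1 : ∑ v ∈ lineThru b w, y1 v = s := by
        rw [sumc b (3⁻¹ * s) y1 hy1M]
        linear_combination s * i3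
      have hSBy0 : ∑ v ∈ lineThru b w, y0 v = -m := by
        rw [sumc b (-(3⁻¹) * m) y0 hy0M]
        linear_combination (-m) * i3
      have hxp : ∀ p, x p = y1 p + y0 p + yh p := by
        intro p
        rw [hxsum]
        simp only [Pi.add_apply]
      have hSBx : SB = s + -m + 0 := by
        rw [hSBdef, ← hSBy1, ← hSBy0, ← hSByh,
          ← Finset.sum_add_distrib, ← Finset.sum_add_distrib]
        exact Finset.sum_congr rfl fun v _ => hxp v
      have hSCx : SC = s + m + 0 := by
        rw [hSCdef, hsdef, hmdef, ← hSCyh,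
          ← Finset.sum_add_distrib, ← Finset.sum_add_distrib]
        exact Finset.sum_congr rfl fun v _ => hxp v
      have hst : s = t := by
        rw [htdef, hSBx, hSCx]
        linear_combination (-s) * i2
      have hml : 3⁻¹ * m = -l := by
        rw [hldef, hSBx, hSCx, e6]
        linear_combination (-(3⁻¹ * m)) * i2
      have hy1x : y1 = t • eL := by
        funext p
        rw [char1 y1 hy1 p, ← hsdef, hst, Pi.smul_apply, smul_eq_mul, heLv p]
        split_ifs <;> ring
      refine ⟨hy1x, ?_, ?_⟩
      · funext p
        show y0 p = if p ∈ lineThru a w then x p + 3⁻¹ * t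
          else if p ∈ lineThru b w then l else -l
        rcases cover p with hp | hp | hp
        · rw [if_pos hp]
          have h1 := hxp p
          rw [char1 y1 hy1 p, if_pos hp, ← hsdef, hst, hL0 p hp] at h1
          linear_combination -h1
        · rw [if_neg (dML p hp), if_pos hp, hy0M p hp]
          linear_combination -hml
        · rw [if_neg (dNL p hp), if_neg (dNM p hp), char0 y0 hy0 p (dNL p hp),
            if_neg (dNM p hp), ← hmdef]
          linear_combination hml
      · funext p
        show yh p = if p ∈ lineThru a w then 0
          else if p ∈ lineThru b w then x p - 3⁻¹ * t - l else x p - 3⁻¹ * t + l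
        rcases cover p with hp | hp | hp
        · rw [if_pos hp]
          exact hL0 p hp
        · rw [if_neg (dML p hp), if_pos hp]
          have h1 := hxp p
          rw [hy1M p hp, hst, hy0M p hp] at h1
          linear_combination -h1 + hml
        · rw [if_neg (dNL p hp), if_neg (dNM p hp)]
          have h1 := hxp p
          rw [char1 y1 hy1 p, if_neg (dNL p hp), ← hsdef, hst,
            char0 y0 hy0 p (dNL p hp), if_neg (dNM p hp), ← hmdef] at h1
          linear_combination -h1 - hml
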